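/- Let m be a nonzero integer and set b = diag(ε^m, ε^{−m}) ∈ SL_2(L). Let t ∈ o_L^× and τ = diag(t, t⁻¹) ∈ SL_2(L). Then for every g ∈ SL_2(L) and every ε-monomial matrix x ∈ SL_2(L): g⁻¹·b·σ(g) ∈ I·x·I if and only if (τ·g)⁻¹·b·σ(τ·g) ∈ I·x·I. In particular, the affine Deligne–Lusztig set {g·I : g⁻¹·b·σ(g) ∈ I·x·I} ⊆ SL_2(L)/I is preserved by left multiplication by every diagonal matrix diag(t, t⁻¹) with t ∈ o_L^×. -/

import Mathlib

noncomputable section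

open Matrix

/-- The ε-adic valuation on `L = k̄((ε))`, with `val 0 = ∞`. -/
def val {K : Type*} [Field K] (x : LaurentSeries K) : WithTop ℤ := x.orderTop

/-- The uniformizer ε of the Laurent series field. -/
def eps (K : Type*) [Field K] : LaurentSeries K := HahnSeries.single 1 1

/-- `σ : L → L` is the Frobenius automorphism: it fixes ε and raises each Laurent-series
coefficient to the `q`-th power.  (This property determines `σ` uniquely.) -/
def IsFrobenius (K : Type*) [Field K] (q : ℕ)
    (σ : LaurentSeries K → LaurentSeries K) : Prop :=
  ∀ (x : LaurentSeries K) (n : ℤ), (σ x).coeff n = (x.coeff n) ^ q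

/-- A square matrix over `L` is of Iwahori form: diagonal entries in `o_L^×`, entries
above the diagonal in `o_L`, entries below the diagonal in `ε·o_L`. -/
def IwahoriForm {K : Type*} [Field K] {n : ℕ}
    (M : Matrix (Fin n) (Fin n) (LaurentSeries K)) : Prop :=
  (∀ i, val (M i i) = 0) ∧
  (∀ i j : Fin n, i < j → 0 ≤ val (M i j)) ∧
  (∀ i j : Fin n, j < i → 1 ≤ val (M i j))

/-- `x` is an ε-monomial matrix. -/
def EpsMonomial {K : Type*} [Field K] {n : ℕ}
    (x : Matrix (Fin n) (Fin n) (LaurentSeries K)) : Prop :=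
  (∀ i, ∃! j, x i j ≠ 0) ∧ (∀ j, ∃! i, x i j ≠ 0) ∧
  (∀ i j, x i j ≠ 0 → ∃ m : ℤ, x i j = eps K ^ m)

/-- `M` lies in the double coset `I·x·I`, where `I` is the Iwahori subgroup of `SL_n(L)`
(matrices of Iwahori form with determinant 1). -/
def InIxISL {K : Type*} [Field K] {n : ℕ}
    (x M : Matrix (Fin n) (Fin n) (LaurentSeries K)) : Prop :=
  ∃ N₁ N₂, IwahoriForm N₁ ∧ N₁.det = 1 ∧ IwahoriForm N₂ ∧ N₂.det = 1 ∧ M = N₁ * x * N₂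

namespace ADLV

variable {K : Type*} [Field K]

/-- `ε^k` as a Laurent series. -/
abbrev epow (K : Type*) [Field K] (k : ℤ) : LaurentSeries K := HahnSeries.single k (1 : K)

theorem epow_ne_zero (k : ℤ) : epow K k ≠ 0 := HahnSeries.single_ne_zero one_ne_zero

theorem eps_zpow (k : ℤ) : eps K ^ k = epow K k := by
  unfold eps epow
  exact (RatFunc.single_zpow k).symm

theorem epow_add (a b : ℤ) : epow K a * epow K b = epow K (a + b) := by
  rw [HahnSeries.single_mul_single, one_mul]

theorem epow_zero : epow K 0 = 1 := by
  ext g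
  simp [HahnSeries.coeff_single, HahnSeries.coeff_one]

theorem val_zero : val (0 : LaurentSeries K) = ⊤ := HahnSeries.orderTop_zero

theorem val_eq_top {x : LaurentSeries K} : val x = ⊤ ↔ x = 0 := HahnSeries.orderTop_eq_top

theorem val_epow (k : ℤ) : val (epow K k) = (k : WithTop ℤ) :=
  HahnSeries.orderTop_single one_ne_zero

theorem val_one : val (1 : LaurentSeries K) = (0 : WithTop ℤ) := by
  rw [← epow_zero]
  exact_mod_cast val_epow 0

theorem val_mul (x y : LaurentSeries K) : val (x * y) = val x + val y := by
  by_cases hx : x = 0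
  · simp [hx, val, HahnSeries.orderTop_zero]
  by_cases hy : y = 0
  · simp [hy, val, HahnSeries.orderTop_zero]
  have h3 : x * y ≠ 0 := mul_ne_zero hx hy
  rw [val, val, val, ← HahnSeries.order_eq_orderTop_of_ne_zero hx,
    ← HahnSeries.order_eq_orderTop_of_ne_zero hy, ← HahnSeries.order_eq_orderTop_of_ne_zero h3,
    HahnSeries.order_mul hx hy]
  exact_mod_cast rfl

theorem val_add_left {x y : LaurentSeries K} (h : val x < val y) : val (x + y) = val x :=
  HahnSeries.orderTop_add_eq_left h

theorem val_add_right {x y : LaurentSeries K} (h : val y < val x) : val (x + y) = val y :=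
  HahnSeries.orderTop_add_eq_right h

theorem le_val_add {c : WithTop ℤ} {x y : LaurentSeries K} (hx : c ≤ val x) (hy : c ≤ val y) :
    c ≤ val (x + y) :=
  le_trans (le_min hx hy) HahnSeries.min_orderTop_le_orderTop_add

theorem val_neg {x : LaurentSeries K} : val (-x) = val x := HahnSeries.orderTop_neg

theorem val_sub_left {x y : LaurentSeries K} (h : val x < val y) : val (x - y) = val x :=
  HahnSeries.orderTop_sub h

theorem val_sub_right {x y : LaurentSeries K} (h : val y < val x) : val (x - y) = val y := by
  rw [show x - y = -(y - x) by ring, val_neg, val_sub_left h]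

theorem le_val_sub {c : WithTop ℤ} {x y : LaurentSeries K} (hx : c ≤ val x) (hy : c ≤ val y) :
    c ≤ val (x - y) := by
  rw [sub_eq_add_neg]
  exact le_val_add hx (by rwa [val_neg (x := y)])

theorem val_exists_coe {x : LaurentSeries K} (hx : x ≠ 0) : ∃ v : ℤ, val x = (v : WithTop ℤ) := by
  have := val_eq_top (x := x)
  rcases WithTop.ne_top_iff_exists.mp (fun h => hx (this.mp h)) with ⟨v, hv⟩
  exact ⟨v, hv.symm⟩

theorem val_inv {x : LaurentSeries K} {v : ℤ} (h : val x = (v : WithTop ℤ)) :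
    val x⁻¹ = ((-v : ℤ) : WithTop ℤ) := by
  have hx : x ≠ 0 := by
    intro h0
    rw [h0, val_zero] at h
    exact (WithTop.top_ne_coe h).elim
  have h1 : val (x * x⁻¹) = (0 : WithTop ℤ) := by rw [mul_inv_cancel₀ hx, val_one]
  rw [val_mul, h] at h1
  obtain ⟨w, hw⟩ := val_exists_coe (inv_ne_zero hx)
  rw [hw] at h1 ⊢
  have : v + w = 0 := by exact_mod_cast h1
  have : w = -v := by omega
  rw [this]

theorem val_inv_zero {x : LaurentSeries K} (h : val x = (0 : WithTop ℤ)) :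
    val x⁻¹ = (0 : WithTop ℤ) := by
  have := val_inv (v := 0) (by exact_mod_cast h)
  simpa using this

theorem ne_zero_of_val_coe {x : LaurentSeries K} {v : ℤ} (h : val x = (v : WithTop ℤ)) :
    x ≠ 0 := by
  intro h0
  rw [h0, val_zero] at h
  exact (WithTop.top_ne_coe h).elim

end ADLV
namespace ADLV

variable {K : Type*} [Field K]

local notation "Mat" => Matrix (Fin 2) (Fin 2) (LaurentSeries K)

theorem iwa_def {M : Mat} :
    IwahoriForm M ↔ (val (M 0 0) = 0 ∧ 0 ≤ val (M 0 1) ∧ 1 ≤ val (M 1 0) ∧ val (M 1 1) = 0) := by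
  constructor
  · rintro ⟨h1, h2, h3⟩
    exact ⟨h1 0, h2 0 1 (by decide), h3 1 0 (by decide), h1 1⟩
  · rintro ⟨h1, h2, h3, h4⟩
    refine ⟨?_, ?_, ?_⟩
    · intro i; fin_cases i <;> assumption
    · intro i j hij; fin_cases i <;> fin_cases j <;> first | exact absurd hij (by decide) | assumption
    · intro i j hij; fin_cases i <;> fin_cases j <;> first | exact absurd hij (by decide) | assumption

theorem iwa_mk {a b c d : LaurentSeries K} (ha : val a = 0) (hb : 0 ≤ val b)
    (hc : 1 ≤ val c) (hd : val d = 0) : IwahoriForm !![a, b; c, d] := by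
  rw [iwa_def]
  refine ⟨?_, ?_, ?_, ?_⟩ <;> simp [*]

theorem iwa_entries {a b c d : LaurentSeries K} (h : IwahoriForm !![a, b; c, d]) :
    val a = 0 ∧ 0 ≤ val b ∧ 1 ≤ val c ∧ val d = 0 := by
  rw [iwa_def] at h
  simpa using h

theorem val_mul_zero {x y : LaurentSeries K} (hx : val x = 0) (hy : val y = 0) :
    val (x * y) = 0 := by
  rw [val_mul, hx, hy, add_zero]

theorem one_le_val_mul {x y : LaurentSeries K} (hx : 0 ≤ val x) (hy : 1 ≤ val y) :
    1 ≤ val (x * y) := by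
  rw [val_mul]
  calc (1 : WithTop ℤ) = 0 + 1 := by norm_num
  _ ≤ val x + val y := add_le_add hx hy

theorem one_le_val_mul' {x y : LaurentSeries K} (hx : 1 ≤ val x) (hy : 0 ≤ val y) :
    1 ≤ val (x * y) := by
  rw [mul_comm]; exact one_le_val_mul hy hx

theorem zero_le_val_mul {x y : LaurentSeries K} (hx : 0 ≤ val x) (hy : 0 ≤ val y) :
    0 ≤ val (x * y) := by
  rw [val_mul]
  calc (0 : WithTop ℤ) = 0 + 0 := by norm_num
  _ ≤ val x + val y := add_le_add hx hy

theorem iwa_mul {A B : Mat} (hA : IwahoriForm A) (hB : IwahoriForm B) :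
    IwahoriForm (A * B) := by
  rw [iwa_def] at hA hB ⊢
  obtain ⟨hA1, hA2, hA3, hA4⟩ := hA
  obtain ⟨hB1, hB2, hB3, hB4⟩ := hB
  have e : ∀ i j, (A * B) i j = A i 0 * B 0 j + A i 1 * B 1 j := by
    intro i j; rw [Matrix.mul_apply, Fin.sum_univ_two]
  refine ⟨?_, ?_, ?_, ?_⟩
  · rw [e 0 0, val_add_left]
    · exact val_mul_zero hA1 hB1
    · rw [val_mul_zero hA1 hB1]
      exact lt_of_lt_of_le (by norm_num) (one_le_val_mul hA2 hB3)
  · rw [e 0 1]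
    exact le_val_add (zero_le_val_mul (le_of_eq hA1.symm) hB2)
      (zero_le_val_mul hA2 (le_of_eq hB4.symm))
  · rw [e 1 0]
    exact le_val_add (one_le_val_mul' hA3 (le_of_eq hB1.symm))
      (one_le_val_mul (le_of_eq hA4.symm) hB3)
  · rw [e 1 1, val_add_right]
    · exact val_mul_zero hA4 hB4
    · rw [val_mul_zero hA4 hB4]
      exact lt_of_lt_of_le (by norm_num) (one_le_val_mul' hA3 hB2)

theorem iwa_adj {P : Mat} (hP : IwahoriForm P) : IwahoriForm (Matrix.adjugate P) := by
  rw [Matrix.adjugate_fin_two]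
  rw [iwa_def] at hP
  obtain ⟨h1, h2, h3, h4⟩ := hP
  apply iwa_mk
  · simpa using h4
  · simpa [val_neg] using h2
  · simpa [val_neg] using h3
  · simpa using h1

theorem det_adj {P : Mat} (hP : P.det = 1) : (Matrix.adjugate P).det = 1 := by
  rw [Matrix.det_adjugate, hP, one_pow]

theorem inIxI_mul {x M P Q : Mat} (hP : IwahoriForm P) (hPd : P.det = 1)
    (hQ : IwahoriForm Q) (hQd : Q.det = 1) (h : InIxISL x M) : InIxISL x (P * M * Q) := by
  obtain ⟨N₁, N₂, h1, h1d, h2, h2d, rfl⟩ := h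
  refine ⟨P * N₁, N₂ * Q, iwa_mul hP h1, ?_, iwa_mul h2 hQ, ?_, ?_⟩
  · rw [Matrix.det_mul, hPd, h1d, one_mul]
  · rw [Matrix.det_mul, h2d, hQd, one_mul]
  · simp only [Matrix.mul_assoc]

theorem inIxI_mul_left {x M P : Mat} (hP : IwahoriForm P) (hPd : P.det = 1)
    (h : InIxISL x M) : InIxISL x (P * M) := by
  obtain ⟨N₁, N₂, h1, h1d, h2, h2d, rfl⟩ := h
  exact ⟨P * N₁, N₂, iwa_mul hP h1, by rw [Matrix.det_mul, hPd, h1d, one_mul], h2, h2d,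
    by simp only [Matrix.mul_assoc]⟩

theorem inIxI_mul_right {x M Q : Mat} (hQ : IwahoriForm Q) (hQd : Q.det = 1)
    (h : InIxISL x M) : InIxISL x (M * Q) := by
  obtain ⟨N₁, N₂, h1, h1d, h2, h2d, rfl⟩ := h
  exact ⟨N₁, N₂ * Q, h1, h1d, iwa_mul h2 hQ, by rw [Matrix.det_mul, h2d, hQd, one_mul],
    by simp only [Matrix.mul_assoc]⟩

theorem eq_sandwich {M P Q N : Mat} (hPd : P.det = 1) (hQd : Q.det = 1)
    (h : P * M * Q = N) : M = Matrix.adjugate P * N * Matrix.adjugate Q := by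
  have h1 : Matrix.adjugate P * P = 1 := by rw [Matrix.adjugate_mul, hPd, one_smul]
  have h2 : Q * Matrix.adjugate Q = 1 := by rw [Matrix.mul_adjugate, hQd, one_smul]
  calc M = (Matrix.adjugate P * P) * M * (Q * Matrix.adjugate Q) := by
        rw [h1, h2, Matrix.one_mul, Matrix.mul_one]
  _ = Matrix.adjugate P * (P * M * Q) * Matrix.adjugate Q := by simp only [Matrix.mul_assoc]
  _ = _ := by rw [h]

theorem inIxI_sandwich_iff {x M P Q : Mat} (hP : IwahoriForm P) (hPd : P.det = 1)
    (hQ : IwahoriForm Q) (hQd : Q.det = 1) : InIxISL x (P * M * Q) ↔ InIxISL x M := by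
  constructor
  · intro h
    have := eq_sandwich (M := M) hPd hQd rfl
    rw [this]
    exact inIxI_mul (iwa_adj hP) (det_adj hPd) (iwa_adj hQ) (det_adj hQd) h
  · exact inIxI_mul hP hPd hQ hQd

end ADLV
namespace ADLV

variable {K : Type*} [Field K]

local notation "Mat" => Matrix (Fin 2) (Fin 2) (LaurentSeries K)

theorem fin_two_ext {α : Type*} {a b c d a' b' c' d' : α} (h1 : a = a') (h2 : b = b')
    (h3 : c = c') (h4 : d = d') : !![a, b; c, d] = !![a', b'; c', d'] := by
  rw [h1, h2, h3, h4]

theorem epow_neg (k : ℤ) : epow K (-k) = (epow K k)⁻¹ := by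
  apply eq_inv_of_mul_eq_one_left
  rw [epow_add]
  simp [epow_zero]

theorem epow_cancel (a : ℤ) : epow K (-a) * epow K a = 1 := by
  rw [epow_add]; simp [epow_zero]

theorem val_coe_lt_iff {x : LaurentSeries K} {v : ℤ} : val x < (v : WithTop ℤ) →
    ∃ w : ℤ, val x = (w : WithTop ℤ) ∧ w < v := by
  intro h
  have hx : x ≠ 0 := by
    intro h0; rw [h0, val_zero] at h; exact absurd h (by simp)
  obtain ⟨w, hw⟩ := val_exists_coe hx
  refine ⟨w, hw, ?_⟩
  rw [hw] at h
  exact_mod_cast h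

/-- factorization of an upper triangular matrix with low-valuation corner entry -/
theorem upper_factor {a V : ℤ} {E : LaurentSeries K} (hE : E ≠ 0)
    (hV : val E = (V : WithTop ℤ)) (h1 : V < a) (h2 : V < -a) :
    ∃ P Q : Mat, IwahoriForm P ∧ P.det = 1 ∧ IwahoriForm Q ∧ Q.det = 1 ∧
      P * !![epow K a, E; 0, epow K (-a)] * Q
        = !![0, epow K V; -(epow K (-V)), 0] := by
  set u₁ : LaurentSeries K := epow K V * E⁻¹ with hu₁
  set u₂ : LaurentSeries K := epow K (-V) * E with hu₂
  set e : LaurentSeries K := -(epow K (-a) * E⁻¹) with he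
  set w : LaurentSeries K := -(epow K a * E⁻¹) with hw
  have hEinv : val E⁻¹ = ((-V : ℤ) : WithTop ℤ) := val_inv hV
  have hvu₁ : val u₁ = 0 := by
    rw [hu₁, val_mul, val_epow, hEinv]
    exact_mod_cast (by omega : V + -V = 0)
  have hvu₂ : val u₂ = 0 := by
    rw [hu₂, val_mul, val_epow, hV]
    exact_mod_cast (by omega : -V + V = 0)
  have hve : 1 ≤ val e := by
    rw [he, val_neg, val_mul, val_epow, hEinv]
    exact_mod_cast (by omega : (1 : ℤ) ≤ -a + -V)
  have hvw : 1 ≤ val w := by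
    rw [hw, val_neg, val_mul, val_epow, hEinv]
    exact_mod_cast (by omega : (1 : ℤ) ≤ a + -V)
  refine ⟨!![u₁, 0; 0, u₂] * !![1, 0; e, 1], !![1, 0; w, 1], ?_, ?_, ?_, ?_, ?_⟩
  · apply iwa_mul
    · exact iwa_mk hvu₁ (by simp [val_zero]) (by simp [val_zero]) hvu₂
    · exact iwa_mk val_one (by simp [val_zero]) hve val_one
  · rw [Matrix.det_mul, Matrix.det_fin_two_of, Matrix.det_fin_two_of]
    have hEE : E⁻¹ * E = 1 := inv_mul_cancel₀ hE
    have hcV : epow K (-V) * epow K V = 1 := epow_cancel V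
    have h : u₁ * u₂ = 1 := by
      simp only [hu₁, hu₂]
      linear_combination (epow K (-V) * epow K V) * hEE + hcV
    rw [show u₁ * u₂ - 0 * 0 = u₁ * u₂ by ring, h]
    ring
  · exact iwa_mk val_one (by simp [val_zero]) hvw val_one
  · rw [Matrix.det_fin_two_of]; ring
  · rw [Matrix.mul_fin_two, Matrix.mul_fin_two, Matrix.mul_fin_two]
    have hEE : E⁻¹ * E = 1 := inv_mul_cancel₀ hE
    have hc : epow K (-a) * epow K a = 1 := epow_cancel a
    have hcV : epow K (-V) * epow K V = 1 := epow_cancel V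
    apply fin_two_ext <;> simp only [hu₁, hu₂, he, hw]
    · linear_combination (-(epow K V * epow K a * E⁻¹)) * hEE
    · linear_combination (epow K V) * hEE
    · linear_combination (-(epow K (-V))) * hc +
        (epow K (-V) * (epow K (-a) * epow K a) * (E⁻¹ * E - 1)) * hEE
    · linear_combination (-(epow K (-V) * epow K (-a) * E)) * hEE
end ADLV
namespace ADLV

variable {K : Type*} [Field K]

local notation "Mat" => Matrix (Fin 2) (Fin 2) (LaurentSeries K)

theorem core_upper (a : ℤ) {E E' : LaurentSeries K} (hval : val E = val E')
    (x : Mat) (h : InIxISL x !![epow K a, E; 0, epow K (-a)]) :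
    InIxISL x !![epow K a, E'; 0, epow K (-a)] := by
  by_cases hcase : ((min a (-a) : ℤ) : WithTop ℤ) ≤ val E
  · -- both entries can be connected by a unipotent multiplication
    have hΔ : ((min a (-a) : ℤ) : WithTop ℤ) ≤ val (E' - E) :=
      le_val_sub (hval ▸ hcase) hcase
    rcases le_total a (-a) with hsign | hsign
    · have hmin : min a (-a) = a := min_eq_left hsign
      rw [hmin] at hΔ
      have hq : 0 ≤ val ((E' - E) * epow K (-a)) := by
        rw [val_mul, val_epow]
        calc (0 : WithTop ℤ) = ((a + -a : ℤ) : WithTop ℤ) := by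
              norm_num
        _ ≤ val (E' - E) + ((-a : ℤ) : WithTop ℤ) := add_le_add_left hΔ _
      have key : !![epow K a, E; 0, epow K (-a)] * !![1, (E' - E) * epow K (-a); 0, 1]
          = !![epow K a, E'; 0, epow K (-a)] := by
        rw [Matrix.mul_fin_two]
        apply fin_two_ext
        · ring
        · have hc : epow K a * epow K (-a) = 1 := by rw [epow_add]; simp [epow_zero]
          linear_combination (E' - E) * hc
        · ring
        · ring
      rw [← key]
      exact inIxI_mul_right
        (iwa_mk val_one hq (by simp [val_zero]) val_one)
        (by rw [Matrix.det_fin_two_of]; ring) h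
    · have hmin : min a (-a) = -a := min_eq_right hsign
      rw [hmin] at hΔ
      have hq : 0 ≤ val ((E' - E) * epow K a) := by
        rw [val_mul, val_epow]
        calc (0 : WithTop ℤ) = ((-a + a : ℤ) : WithTop ℤ) := by norm_num
        _ ≤ val (E' - E) + ((a : ℤ) : WithTop ℤ) := add_le_add_left hΔ _
      have key : !![1, (E' - E) * epow K a; 0, 1] * !![epow K a, E; 0, epow K (-a)]
          = !![epow K a, E'; 0, epow K (-a)] := by
        rw [Matrix.mul_fin_two]
        apply fin_two_ext
        · ring
        · have hc : epow K a * epow K (-a) = 1 := by rw [epow_add]; simp [epow_zero]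
          linear_combination (E' - E) * hc
        · ring
        · ring
      rw [← key]
      exact inIxI_mul_left
        (iwa_mk val_one hq (by simp [val_zero]) val_one)
        (by rw [Matrix.det_fin_two_of]; ring) h
  · -- low valuation: both are I-equivalent to the same antidiagonal matrix
    push_neg at hcase
    obtain ⟨V, hV, hVlt⟩ := val_coe_lt_iff hcase
    have h1 : V < a := lt_of_lt_of_le hVlt (min_le_left _ _)
    have h2 : V < -a := lt_of_lt_of_le hVlt (min_le_right _ _)
    have hE : E ≠ 0 := ne_zero_of_val_coe hV
    have hV' : val E' = (V : WithTop ℤ) := hval ▸ hV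
    have hE' : E' ≠ 0 := ne_zero_of_val_coe hV'
    obtain ⟨P, Q, hP, hPd, hQ, hQd, hfac⟩ := upper_factor hE hV h1 h2
    obtain ⟨P', Q', hP', hPd', hQ', hQd', hfac'⟩ := upper_factor hE' hV' h1 h2
    have hxV : InIxISL x !![0, epow K V; -(epow K (-V)), 0] := by
      rw [← hfac]
      exact inIxI_mul hP hPd hQ hQd h
    have := eq_sandwich hPd' hQd' hfac'
    rw [this]
    exact inIxI_mul (iwa_adj hP') (det_adj hPd') (iwa_adj hQ') (det_adj hQd') hxV

theorem lower_factor {a V : ℤ} {E : LaurentSeries K} (hE : E ≠ 0)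
    (hV : val E = (V : WithTop ℤ)) (h1 : V ≤ a) (h2 : V ≤ -a) :
    ∃ P Q : Mat, IwahoriForm P ∧ P.det = 1 ∧ IwahoriForm Q ∧ Q.det = 1 ∧
      P * !![epow K a, 0; E, epow K (-a)] * Q
        = !![0, epow K (-V); -(epow K V), 0] := by
  set u₁ : LaurentSeries K := -(epow K (-V) * E) with hu₁
  set u₂ : LaurentSeries K := -(epow K V * E⁻¹) with hu₂
  set f : LaurentSeries K := -(epow K a * E⁻¹) with hf
  set w : LaurentSeries K := -(epow K (-a) * E⁻¹) with hw
  have hEinv : val E⁻¹ = ((-V : ℤ) : WithTop ℤ) := val_inv hV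
  have hvu₁ : val u₁ = 0 := by
    rw [hu₁, val_neg, val_mul, val_epow, hV]
    exact_mod_cast (by omega : -V + V = 0)
  have hvu₂ : val u₂ = 0 := by
    rw [hu₂, val_neg, val_mul, val_epow, hEinv]
    exact_mod_cast (by omega : V + -V = 0)
  have hvf : 0 ≤ val f := by
    rw [hf, val_neg, val_mul, val_epow, hEinv]
    exact_mod_cast (by omega : (0 : ℤ) ≤ a + -V)
  have hvw : 0 ≤ val w := by
    rw [hw, val_neg, val_mul, val_epow, hEinv]
    exact_mod_cast (by omega : (0 : ℤ) ≤ -a + -V)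
  have hEE : E⁻¹ * E = 1 := inv_mul_cancel₀ hE
  have hc : epow K (-a) * epow K a = 1 := epow_cancel a
  have hcV : epow K (-V) * epow K V = 1 := epow_cancel V
  refine ⟨!![u₁, 0; 0, u₂] * !![1, f; 0, 1], !![1, w; 0, 1], ?_, ?_, ?_, ?_, ?_⟩
  · apply iwa_mul
    · exact iwa_mk hvu₁ (by simp [val_zero]) (by simp [val_zero]) hvu₂
    · exact iwa_mk val_one hvf (by simp [val_zero]) val_one
  · rw [Matrix.det_mul, Matrix.det_fin_two_of, Matrix.det_fin_two_of]
    have h : u₁ * u₂ = 1 := by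
      simp only [hu₁, hu₂]
      linear_combination (epow K (-V) * epow K V) * hEE + hcV
    rw [show u₁ * u₂ - 0 * 0 = u₁ * u₂ by ring, h]
    ring
  · exact iwa_mk val_one hvw (by simp [val_zero]) val_one
  · rw [Matrix.det_fin_two_of]; ring
  · rw [Matrix.mul_fin_two, Matrix.mul_fin_two, Matrix.mul_fin_two]
    apply fin_two_ext <;> simp only [hu₁, hu₂, hf, hw]
    · linear_combination (epow K (-V) * E * epow K a) * hEE
    · linear_combination (epow K (-V)) * hc +
        (-(epow K (-V) * (epow K (-a) * epow K a) * (E⁻¹ * E - 1))) * hEE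
    · linear_combination (-(epow K V)) * hEE
    · linear_combination (epow K V * epow K (-a) * E⁻¹) * hEE

theorem core_lower (a : ℤ) {E E' : LaurentSeries K} (hval : val E = val E')
    (x : Mat) (h : InIxISL x !![epow K a, 0; E, epow K (-a)]) :
    InIxISL x !![epow K a, 0; E', epow K (-a)] := by
  by_cases hcase : ((min a (-a) + 1 : ℤ) : WithTop ℤ) ≤ val E
  · have hΔ : ((min a (-a) + 1 : ℤ) : WithTop ℤ) ≤ val (E' - E) :=
      le_val_sub (hval ▸ hcase) hcase
    rcases le_total a (-a) with hsign | hsign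
    · have hmin : min a (-a) = a := min_eq_left hsign
      rw [hmin] at hΔ
      have hq : 1 ≤ val ((E' - E) * epow K (-a)) := by
        rw [val_mul, val_epow]
        calc (1 : WithTop ℤ) = ((a + 1 + -a : ℤ) : WithTop ℤ) := by norm_num
        _ ≤ val (E' - E) + ((-a : ℤ) : WithTop ℤ) := add_le_add_left hΔ _
      have key : !![1, 0; (E' - E) * epow K (-a), 1] * !![epow K a, 0; E, epow K (-a)]
          = !![epow K a, 0; E', epow K (-a)] := by
        rw [Matrix.mul_fin_two]
        apply fin_two_ext
        · ring
        · ring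
        · have hc : epow K (-a) * epow K a = 1 := epow_cancel a
          linear_combination (E' - E) * hc
        · ring
      rw [← key]
      exact inIxI_mul_left
        (iwa_mk val_one (by simp [val_zero]) hq val_one)
        (by rw [Matrix.det_fin_two_of]; ring) h
    · have hmin : min a (-a) = -a := min_eq_right hsign
      rw [hmin] at hΔ
      have hq : 1 ≤ val ((E' - E) * epow K a) := by
        rw [val_mul, val_epow]
        calc (1 : WithTop ℤ) = ((-a + 1 + a : ℤ) : WithTop ℤ) := by norm_num
        _ ≤ val (E' - E) + ((a : ℤ) : WithTop ℤ) := add_le_add_left hΔ _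
      have key : !![epow K a, 0; E, epow K (-a)] * !![1, 0; (E' - E) * epow K a, 1]
          = !![epow K a, 0; E', epow K (-a)] := by
        rw [Matrix.mul_fin_two]
        apply fin_two_ext
        · ring
        · ring
        · have hc : epow K (-a) * epow K a = 1 := epow_cancel a
          linear_combination (E' - E) * hc
        · ring
      rw [← key]
      exact inIxI_mul_right
        (iwa_mk val_one (by simp [val_zero]) hq val_one)
        (by rw [Matrix.det_fin_two_of]; ring) h
  · push_neg at hcase
    obtain ⟨V, hV, hVlt⟩ := val_coe_lt_iff hcase
    have h1 : V ≤ a := by have := min_le_left a (-a); omega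
    have h2 : V ≤ -a := by have := min_le_right a (-a); omega
    have hE : E ≠ 0 := ne_zero_of_val_coe hV
    have hV' : val E' = (V : WithTop ℤ) := hval ▸ hV
    have hE' : E' ≠ 0 := ne_zero_of_val_coe hV'
    obtain ⟨P, Q, hP, hPd, hQ, hQd, hfac⟩ := lower_factor hE hV h1 h2
    obtain ⟨P', Q', hP', hPd', hQ', hQd', hfac'⟩ := lower_factor hE' hV' h1 h2
    have hxV : InIxISL x !![0, epow K (-V); -(epow K V), 0] := by
      rw [← hfac]
      exact inIxI_mul hP hPd hQ hQd h
    have := eq_sandwich hPd' hQd' hfac'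
    rw [this]
    exact inIxI_mul (iwa_adj hP') (det_adj hPd') (iwa_adj hQ') (det_adj hQd') hxV

end ADLV
namespace ADLV

variable {K : Type*} [Field K]

local notation "Mat" => Matrix (Fin 2) (Fin 2) (LaurentSeries K)

/-- Coefficientwise application of a ring endomorphism of `K`, as a ring
endomorphism of Laurent series. -/
def liftHom (φ : K →+* K) : LaurentSeries K →+* LaurentSeries K where
  toFun x := x.map φ
  map_one' := by
    ext g
    simp only [HahnSeries.map_coeff, HahnSeries.coeff_one]
    split <;> simp
  map_mul' x y := by
    show (x * y).map (φ : K →ₙ+* K) = x.map (φ : K →ₙ+* K) * y.map (φ : K →ₙ+* K)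
    exact HahnSeries.map_mul (φ : K →ₙ+* K)
  map_zero' := by
    ext g
    simp only [HahnSeries.map_coeff, HahnSeries.coeff_zero, map_zero]
  map_add' x y := by
    ext g
    simp only [HahnSeries.map_coeff, HahnSeries.coeff_add, map_add]

theorem liftHom_coeff (φ : K →+* K) (x : LaurentSeries K) (n : ℤ) :
    (liftHom φ x).coeff n = φ (x.coeff n) := rfl

theorem val_liftHom (φ : K →+* K) (x : LaurentSeries K) : val (liftHom φ x) = val x := by
  have hinj : Function.Injective φ := φ.injective
  have key : ∀ g : ℤ, (liftHom φ x).coeff g ≠ 0 ↔ x.coeff g ≠ 0 := by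
    intro g
    rw [liftHom_coeff]
    constructor
    · intro h h0; exact h (by rw [h0, map_zero])
    · intro h h0; exact h (hinj (by rwa [map_zero]))
  by_cases hx : x = 0
  · rw [hx, map_zero]
  · have hcx : x.coeff x.order ≠ 0 :=
      HahnSeries.coeff_orderTop_ne (HahnSeries.order_eq_orderTop_of_ne_zero hx).symm
    have hmapne : liftHom φ x ≠ 0 := by
      intro h0
      apply (key x.order).mpr hcx
      rw [h0]
      simp
    have hcm : (liftHom φ x).coeff (liftHom φ x).order ≠ 0 :=
      HahnSeries.coeff_orderTop_ne (HahnSeries.order_eq_orderTop_of_ne_zero hmapne).symm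
    have hvx : val x = ((x.order : ℤ) : WithTop ℤ) :=
      (HahnSeries.order_eq_orderTop_of_ne_zero hx).symm
    have hvm : val (liftHom φ x) = (((liftHom φ x).order : ℤ) : WithTop ℤ) :=
      (HahnSeries.order_eq_orderTop_of_ne_zero hmapne).symm
    apply le_antisymm
    · rw [hvx]
      exact HahnSeries.orderTop_le_of_coeff_ne_zero ((key x.order).mpr hcx)
    · rw [hvm]
      exact HahnSeries.orderTop_le_of_coeff_ne_zero ((key _).mp hcm)

theorem liftHom_single (φ : K →+* K) (k : ℤ) (c : K) :
    liftHom φ (HahnSeries.single k c) = HahnSeries.single k (φ c) := by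
  ext g
  rw [liftHom_coeff]
  rw [HahnSeries.coeff_single, HahnSeries.coeff_single]
  split <;> simp

theorem liftHom_epow (φ : K →+* K) (k : ℤ) : liftHom φ (epow K k) = epow K k := by
  rw [liftHom_single, φ.map_one]

theorem map_explicit (φ : K →+* K) (a b c d : LaurentSeries K) :
    (!![a, b; c, d]).map (liftHom φ) =
      !![liftHom φ a, liftHom φ b; liftHom φ c, liftHom φ d] := by
  ext i j
  fin_cases i <;> fin_cases j <;> simp [Matrix.map_apply]

theorem iwa_map (φ : K →+* K) {P : Mat} (hP : IwahoriForm P) :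
    IwahoriForm (P.map (liftHom φ)) := by
  rw [iwa_def] at hP ⊢
  obtain ⟨h1, h2, h3, h4⟩ := hP
  refine ⟨?_, ?_, ?_, ?_⟩ <;>
    rw [Matrix.map_apply, val_liftHom] <;> assumption

theorem det_map_one (φ : K →+* K) {P : Mat} (hPd : P.det = 1) :
    (P.map (liftHom φ)).det = 1 := by
  have h := RingHom.map_det (liftHom φ) P
  rw [RingHom.mapMatrix_apply] at h
  rw [← h, hPd, (liftHom φ).map_one]

end ADLV
namespace ADLV

variable {K : Type*} [Field K]

local notation "Mat" => Matrix (Fin 2) (Fin 2) (LaurentSeries K)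

theorem epow_eq {a b : ℤ} (h : a = b) : epow K a = epow K b := by rw [h]

theorem epow_mul₃ {a b c d : ℤ} (h : a + b + c = d) :
    epow K a * epow K b * epow K c = epow K d := by
  rw [epow_add, epow_add]; exact epow_eq h

theorem diag_two (p q : LaurentSeries K) : Matrix.diagonal ![p, q] = !![p, 0; 0, q] := by
  ext i j
  fin_cases i <;> fin_cases j <;> simp [Matrix.diagonal]

theorem inv_eq_adj {g : Mat} (hg : g.det = 1) : g⁻¹ = Matrix.adjugate g := by
  rw [Matrix.inv_def, hg, Ring.inverse_one, one_smul]

theorem decomp_red (φ : K →+* K) {x g R j B : Mat} (hgdet : g.det = 1) (hgRj : g = R * j)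
    (hj : IwahoriForm j) (hjdet : j.det = 1) :
    InIxISL x (g⁻¹ * B * g.map (liftHom φ)) ↔
      InIxISL x (Matrix.adjugate R * B * R.map (liftHom φ)) := by
  have hinv : g⁻¹ = Matrix.adjugate g := inv_eq_adj hgdet
  have hadj : Matrix.adjugate g = Matrix.adjugate j * Matrix.adjugate R := by
    rw [hgRj, Matrix.adjugate_mul_distrib]
  have hmap : g.map (liftHom φ) = R.map (liftHom φ) * j.map (liftHom φ) := by
    rw [hgRj]; exact Matrix.map_mul
  rw [hinv, hadj, hmap]
  have assoc : Matrix.adjugate j * Matrix.adjugate R * B *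
        (R.map (liftHom φ) * j.map (liftHom φ))
      = Matrix.adjugate j * (Matrix.adjugate R * B * R.map (liftHom φ)) *
        j.map (liftHom φ) := by
    simp only [Matrix.mul_assoc]
  rw [assoc]
  exact inIxI_sandwich_iff (iwa_adj hj) (det_adj hjdet) (iwa_map φ hj) (det_map_one φ hjdet)

theorem fam1_matrix (φ : K →+* K) (y : LaurentSeries K) (r m : ℤ) :
    Matrix.adjugate !![epow K r, y * epow K (-r); 0, epow K (-r)] *
        !![epow K m, 0; 0, epow K (-m)] *
        (!![epow K r, y * epow K (-r); 0, epow K (-r)]).map (liftHom φ)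
      = !![epow K m, liftHom φ y * epow K (m - 2*r) - y * epow K (-m - 2*r);
          0, epow K (-m)] := by
  rw [Matrix.adjugate_fin_two_of, map_explicit, _root_.map_mul (liftHom φ) y (epow K (-r)),
    liftHom_epow, liftHom_epow, (liftHom φ).map_zero]
  rw [Matrix.mul_fin_two, Matrix.mul_fin_two]
  have h1 : epow K (-r) * epow K m * epow K r = epow K m := epow_mul₃ (by ring)
  have h2 : epow K (-r) * epow K m * epow K (-r) = epow K (m - 2*r) := epow_mul₃ (by ring)
  have h3 : epow K (-r) * epow K (-m) * epow K (-r) = epow K (-m - 2*r) := epow_mul₃ (by ring)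
  have h4 : epow K r * epow K (-m) * epow K (-r) = epow K (-m) := epow_mul₃ (by ring)
  apply fin_two_ext
  · linear_combination h1
  · linear_combination (liftHom φ y) * h2 - y * h3
  · ring
  · linear_combination h4

theorem fam2_matrix (φ : K →+* K) (y : LaurentSeries K) (r m : ℤ) :
    Matrix.adjugate !![-(y * epow K (-r)), epow K r; -(epow K (-r)), 0] *
        !![epow K m, 0; 0, epow K (-m)] *
        (!![-(y * epow K (-r)), epow K r; -(epow K (-r)), 0]).map (liftHom φ)
      = !![epow K (-m), 0;
          -(liftHom φ y * epow K (m - 2*r) - y * epow K (-m - 2*r)), epow K m] := by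
  rw [Matrix.adjugate_fin_two_of, map_explicit, map_neg, map_neg,
    _root_.map_mul (liftHom φ) y (epow K (-r)),
    liftHom_epow, liftHom_epow, (liftHom φ).map_zero]
  rw [Matrix.mul_fin_two, Matrix.mul_fin_two]
  have h1 : epow K (-r) * epow K m * epow K r = epow K m := epow_mul₃ (by ring)
  have h2 : epow K (-r) * epow K m * epow K (-r) = epow K (m - 2*r) := epow_mul₃ (by ring)
  have h3 : epow K (-r) * epow K (-m) * epow K (-r) = epow K (-m - 2*r) := epow_mul₃ (by ring)
  have h4 : epow K r * epow K (-m) * epow K (-r) = epow K (-m) := epow_mul₃ (by ring)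
  apply fin_two_ext
  · linear_combination h4
  · ring
  · linear_combination (-(liftHom φ y)) * h2 + y * h3
  · linear_combination h1

theorem val_E (φ : K →+* K) {m : ℤ} (hm : m ≠ 0) (r : ℤ) {y y' : LaurentSeries K}
    (h : val y = val y') :
    val (liftHom φ y * epow K (m - 2*r) - y * epow K (-m - 2*r)) =
    val (liftHom φ y' * epow K (m - 2*r) - y' * epow K (-m - 2*r)) := by
  by_cases hy : y = 0
  · have hy' : y' = 0 := val_eq_top.mp (by rw [← h, hy, val_zero])
    rw [hy, hy']
  · have hy' : y' ≠ 0 := fun h0 => hy (val_eq_top.mp (by rw [h, h0, val_zero]))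
    obtain ⟨v, hv⟩ := val_exists_coe hy
    have hv' : val y' = (v : WithTop ℤ) := by rw [← h, hv]
    have t1 : val (liftHom φ y * epow K (m - 2*r)) = ((v + (m - 2*r) : ℤ) : WithTop ℤ) := by
      rw [val_mul, val_epow, val_liftHom, hv]
      exact_mod_cast rfl
    have t2 : val (y * epow K (-m - 2*r)) = ((v + (-m - 2*r) : ℤ) : WithTop ℤ) := by
      rw [val_mul, val_epow, hv]
      exact_mod_cast rfl
    have t1' : val (liftHom φ y' * epow K (m - 2*r)) = ((v + (m - 2*r) : ℤ) : WithTop ℤ) := by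
      rw [val_mul, val_epow, val_liftHom, hv']
      exact_mod_cast rfl
    have t2' : val (y' * epow K (-m - 2*r)) = ((v + (-m - 2*r) : ℤ) : WithTop ℤ) := by
      rw [val_mul, val_epow, hv']
      exact_mod_cast rfl
    rcases lt_or_gt_of_ne hm with hlt | hgt
    · -- m < 0 : v + (m - 2r) < v + (-m - 2r)
      have hcmp : (v + (m - 2*r) : ℤ) < (v + (-m - 2*r) : ℤ) := by omega
      rw [val_sub_left (by rw [t1, t2]; exact_mod_cast hcmp),
        val_sub_left (by rw [t1', t2']; exact_mod_cast hcmp), t1, t1']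
    · have hcmp : (v + (-m - 2*r) : ℤ) < (v + (m - 2*r) : ℤ) := by omega
      rw [val_sub_right (by rw [t1, t2]; exact_mod_cast hcmp),
        val_sub_right (by rw [t1', t2']; exact_mod_cast hcmp), t2, t2']

end ADLV
namespace ADLV

variable {K : Type*} [Field K]

local notation "Mat" => Matrix (Fin 2) (Fin 2) (LaurentSeries K)

theorem main_case1 (φ : K →+* K) {m : ℤ} (hm : m ≠ 0) {t : LaurentSeries K}
    (ht : val t = 0) {α β γ δ : LaurentSeries K} (hd : α * δ - β * γ = 1) {vδ : ℤ}
    (hδ : val δ = (vδ : WithTop ℤ)) (hγ : ((vδ : WithTop ℤ) + 1) ≤ val γ) (x : Mat) :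
    (InIxISL x ((!![α, β; γ, δ])⁻¹ * !![epow K m, 0; 0, epow K (-m)] *
        (!![α, β; γ, δ]).map (liftHom φ)) ↔
      InIxISL x ((!![t, 0; 0, t⁻¹] * !![α, β; γ, δ])⁻¹ * !![epow K m, 0; 0, epow K (-m)] *
        (!![t, 0; 0, t⁻¹] * !![α, β; γ, δ]).map (liftHom φ))) := by
  have hδ0 : δ ≠ 0 := ne_zero_of_val_coe hδ
  have ht0 : t ≠ 0 := ne_zero_of_val_coe (v := 0) (by exact_mod_cast ht)
  set r : ℤ := -vδ with hr
  set y : LaurentSeries K := β * δ⁻¹ with hy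
  set y' : LaurentSeries K := t * t * y with hy'
  have hP : epow K (-r) * epow K r = 1 := epow_cancel r
  have hD : δ⁻¹ * δ = 1 := inv_mul_cancel₀ hδ0
  have htt : t⁻¹ * t = 1 := inv_mul_cancel₀ ht0
  have hvδinv : val δ⁻¹ = ((-vδ : ℤ) : WithTop ℤ) := val_inv hδ
  have hvt : val t⁻¹ = 0 := val_inv_zero ht
  -- the Iwahori factor
  have hjIwa : IwahoriForm !![epow K (-r) * δ⁻¹, 0; epow K r * γ, epow K r * δ] := by
    apply iwa_mk
    · rw [val_mul, val_epow, hvδinv]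
      exact_mod_cast (by omega : -r + -vδ = 0)
    · simp [val_zero]
    · rw [val_mul, val_epow]
      have h1 : ((vδ : WithTop ℤ) + 1) = (((vδ + 1 : ℤ)) : WithTop ℤ) := by push_cast; ring
      calc (1 : WithTop ℤ) = ((r + (vδ + 1) : ℤ) : WithTop ℤ) := by
            rw [hr]; norm_num
      _ = ((r : ℤ) : WithTop ℤ) + (((vδ + 1 : ℤ)) : WithTop ℤ) := by push_cast; ring
      _ ≤ ((r : ℤ) : WithTop ℤ) + val γ := add_le_add_right (h1 ▸ hγ) _
    · rw [val_mul, val_epow, hδ]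
      exact_mod_cast (by omega : r + vδ = 0)
  have hjdet : (!![epow K (-r) * δ⁻¹, 0; epow K r * γ, epow K r * δ]).det = 1 := by
    rw [Matrix.det_fin_two_of]
    linear_combination (δ⁻¹ * δ) * hP + hD
  have hgRj : !![α, β; γ, δ] = !![epow K r, y * epow K (-r); 0, epow K (-r)] *
      !![epow K (-r) * δ⁻¹, 0; epow K r * γ, epow K r * δ] := by
    rw [Matrix.mul_fin_two]
    apply fin_two_ext
    · linear_combination (-(δ⁻¹ + β * δ⁻¹ * γ)) * hP + (-α) * hD + δ⁻¹ * hd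
    · linear_combination (-(β * δ⁻¹ * δ)) * hP + (-β) * hD
    · linear_combination (-γ) * hP
    · linear_combination (-δ) * hP
  have hgdet : (!![α, β; γ, δ]).det = 1 := by rw [Matrix.det_fin_two_of]; exact hd
  have side1 := decomp_red (x := x) (B := !![epow K m, 0; 0, epow K (-m)]) φ hgdet hgRj
    hjIwa hjdet
  -- now the τ side
  have hdτ : (!![t, 0; 0, t⁻¹] : Mat).det = 1 := by
    rw [Matrix.det_fin_two_of]; linear_combination htt
  have hτgdet : (!![t, 0; 0, t⁻¹] * !![α, β; γ, δ]).det = 1 := by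
    rw [Matrix.det_mul, hdτ, hgdet, one_mul]
  have hτR : !![t, 0; 0, t⁻¹] * !![epow K r, y * epow K (-r); 0, epow K (-r)]
      = !![epow K r, y' * epow K (-r); 0, epow K (-r)] * !![t, 0; 0, t⁻¹] := by
    rw [Matrix.mul_fin_two, Matrix.mul_fin_two]
    apply fin_two_ext
    · ring
    · linear_combination (-(t * y * epow K (-r))) * htt
    · ring
    · ring
  have hτgRj : !![t, 0; 0, t⁻¹] * !![α, β; γ, δ]
      = !![epow K r, y' * epow K (-r); 0, epow K (-r)] *
        (!![t, 0; 0, t⁻¹] * !![epow K (-r) * δ⁻¹, 0; epow K r * γ, epow K r * δ]) := by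
    rw [hgRj, ← Matrix.mul_assoc, hτR, Matrix.mul_assoc]
  have hj₂Iwa : IwahoriForm (!![t, 0; 0, t⁻¹] *
      !![epow K (-r) * δ⁻¹, 0; epow K r * γ, epow K r * δ]) :=
    iwa_mul (iwa_mk ht (by simp [val_zero]) (by simp [val_zero]) hvt) hjIwa
  have hj₂det : (!![t, 0; 0, t⁻¹] *
      !![epow K (-r) * δ⁻¹, 0; epow K r * γ, epow K r * δ]).det = 1 := by
    rw [Matrix.det_mul, hdτ, hjdet, one_mul]
  have side2 := decomp_red (x := x) (B := !![epow K m, 0; 0, epow K (-m)]) φ hτgdet hτgRj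
    hj₂Iwa hj₂det
  rw [fam1_matrix φ y r m] at side1
  rw [fam1_matrix φ y' r m] at side2
  rw [side1, side2]
  have hvy : val y = val y' := by
    rw [hy', val_mul (t * t) y, val_mul t t, ht]
    norm_num
  have hE := val_E φ hm r hvy
  exact ⟨core_upper m hE x, core_upper m hE.symm x⟩

theorem main_case2 (φ : K →+* K) {m : ℤ} (hm : m ≠ 0) {t : LaurentSeries K}
    (ht : val t = 0) {α β γ δ : LaurentSeries K} (hd : α * δ - β * γ = 1) {vγ : ℤ}
    (hγ : val γ = (vγ : WithTop ℤ)) (hδ : (vγ : WithTop ℤ) ≤ val δ) (x : Mat) :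
    (InIxISL x ((!![α, β; γ, δ])⁻¹ * !![epow K m, 0; 0, epow K (-m)] *
        (!![α, β; γ, δ]).map (liftHom φ)) ↔
      InIxISL x ((!![t, 0; 0, t⁻¹] * !![α, β; γ, δ])⁻¹ * !![epow K m, 0; 0, epow K (-m)] *
        (!![t, 0; 0, t⁻¹] * !![α, β; γ, δ]).map (liftHom φ))) := by
  have hγ0 : γ ≠ 0 := ne_zero_of_val_coe hγ
  have ht0 : t ≠ 0 := ne_zero_of_val_coe (v := 0) (by exact_mod_cast ht)
  set r : ℤ := -vγ with hr
  set y : LaurentSeries K := α * γ⁻¹ with hy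
  set y' : LaurentSeries K := t * t * y with hy'
  have hP : epow K (-r) * epow K r = 1 := epow_cancel r
  have hC : γ⁻¹ * γ = 1 := inv_mul_cancel₀ hγ0
  have htt : t⁻¹ * t = 1 := inv_mul_cancel₀ ht0
  have hvγinv : val γ⁻¹ = ((-vγ : ℤ) : WithTop ℤ) := val_inv hγ
  have hvt : val t⁻¹ = 0 := val_inv_zero ht
  have hjIwa : IwahoriForm !![-(epow K r * γ), -(epow K r * δ); 0, -(epow K (-r) * γ⁻¹)] := by
    apply iwa_mk
    · rw [val_neg, val_mul, val_epow, hγ]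
      exact_mod_cast (by omega : r + vγ = 0)
    · rw [val_neg, val_mul, val_epow]
      calc (0 : WithTop ℤ) = ((r + vγ : ℤ) : WithTop ℤ) := by rw [hr]; norm_num
      _ = ((r : ℤ) : WithTop ℤ) + ((vγ : ℤ) : WithTop ℤ) := by push_cast; ring
      _ ≤ ((r : ℤ) : WithTop ℤ) + val δ := add_le_add_right hδ _
    · simp [val_zero]
    · rw [val_neg, val_mul, val_epow, hvγinv]
      exact_mod_cast (by omega : -r + -vγ = 0)
  have hjdet : (!![-(epow K r * γ), -(epow K r * δ); 0, -(epow K (-r) * γ⁻¹)]).det = 1 := by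
    rw [Matrix.det_fin_two_of]
    linear_combination (γ⁻¹ * γ) * hP + hC
  have hgRj : !![α, β; γ, δ] = !![-(y * epow K (-r)), epow K r; -(epow K (-r)), 0] *
      !![-(epow K r * γ), -(epow K r * δ); 0, -(epow K (-r) * γ⁻¹)] := by
    rw [Matrix.mul_fin_two]
    apply fin_two_ext
    · linear_combination (-(α * γ⁻¹ * γ)) * hP + (-α) * hC
    · linear_combination (-(α * γ⁻¹ * δ - γ⁻¹)) * hP + (-γ⁻¹) * hd + (-β) * hC
    · linear_combination (-γ) * hP
    · linear_combination (-δ) * hP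
  have hgdet : (!![α, β; γ, δ]).det = 1 := by rw [Matrix.det_fin_two_of]; exact hd
  have side1 := decomp_red (x := x) (B := !![epow K m, 0; 0, epow K (-m)]) φ hgdet hgRj
    hjIwa hjdet
  have hdτ : (!![t, 0; 0, t⁻¹] : Mat).det = 1 := by
    rw [Matrix.det_fin_two_of]; linear_combination htt
  have hτgdet : (!![t, 0; 0, t⁻¹] * !![α, β; γ, δ]).det = 1 := by
    rw [Matrix.det_mul, hdτ, hgdet, one_mul]
  have hτR : !![t, 0; 0, t⁻¹] * !![-(y * epow K (-r)), epow K r; -(epow K (-r)), 0]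
      = !![-(y' * epow K (-r)), epow K r; -(epow K (-r)), 0] * !![t⁻¹, 0; 0, t] := by
    rw [Matrix.mul_fin_two, Matrix.mul_fin_two]
    apply fin_two_ext
    · linear_combination (t * y * epow K (-r)) * htt
    · ring
    · ring
    · ring
  have hτgRj : !![t, 0; 0, t⁻¹] * !![α, β; γ, δ]
      = !![-(y' * epow K (-r)), epow K r; -(epow K (-r)), 0] *
        (!![t⁻¹, 0; 0, t] *
          !![-(epow K r * γ), -(epow K r * δ); 0, -(epow K (-r) * γ⁻¹)]) := by
    rw [hgRj, ← Matrix.mul_assoc, hτR, Matrix.mul_assoc]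
  have hdτ' : (!![t⁻¹, 0; 0, t] : Mat).det = 1 := by
    rw [Matrix.det_fin_two_of]; linear_combination (-1 : LaurentSeries K) * htt + htt + htt
  have hj₂Iwa : IwahoriForm (!![t⁻¹, 0; 0, t] *
      !![-(epow K r * γ), -(epow K r * δ); 0, -(epow K (-r) * γ⁻¹)]) :=
    iwa_mul (iwa_mk hvt (by simp [val_zero]) (by simp [val_zero]) ht) hjIwa
  have hj₂det : (!![t⁻¹, 0; 0, t] *
      !![-(epow K r * γ), -(epow K r * δ); 0, -(epow K (-r) * γ⁻¹)]).det = 1 := by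
    rw [Matrix.det_mul, hdτ', hjdet, one_mul]
  have side2 := decomp_red (x := x) (B := !![epow K m, 0; 0, epow K (-m)]) φ hτgdet hτgRj
    hj₂Iwa hj₂det
  rw [fam2_matrix φ y r m] at side1
  rw [fam2_matrix φ y' r m] at side2
  rw [side1, side2]
  have hvy : val y = val y' := by
    rw [hy', val_mul (t * t) y, val_mul t t, ht]
    norm_num
  have hE := val_E φ hm r hvy
  have hE' : val (-(liftHom φ y * epow K (m - 2*r) - y * epow K (-m - 2*r)))
      = val (-(liftHom φ y' * epow K (m - 2*r) - y' * epow K (-m - 2*r))) := by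
    rw [val_neg, val_neg]; exact hE
  have e : epow K (-(-m)) = epow K m := epow_eq (neg_neg m)
  constructor
  · intro h
    have h' := core_lower (-m) hE' x (by rw [e]; exact h)
    rwa [e] at h'
  · intro h
    have h' := core_lower (-m) hE'.symm x (by rw [e]; exact h)
    rwa [e] at h'

theorem main_generic (φ : K →+* K) {m : ℤ} (hm : m ≠ 0) {t : LaurentSeries K}
    (ht : val t = 0) (g x : Mat) (hg : g.det = 1) :
    InIxISL x (g⁻¹ * !![epow K m, 0; 0, epow K (-m)] * g.map (liftHom φ)) ↔
    InIxISL x ((!![t, 0; 0, t⁻¹] * g)⁻¹ * !![epow K m, 0; 0, epow K (-m)] *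
      (!![t, 0; 0, t⁻¹] * g).map (liftHom φ)) := by
  have hge : g = !![g 0 0, g 0 1; g 1 0, g 1 1] := Matrix.eta_fin_two g
  set α := g 0 0
  set β := g 0 1
  set γ := g 1 0
  set δ := g 1 1
  have hd : α * δ - β * γ = 1 := by
    rw [hge, Matrix.det_fin_two_of] at hg
    exact hg
  rw [hge]
  by_cases hδ0 : δ = 0
  · -- then γ ≠ 0 and val δ = ⊤ ≥ val γ : case 2
    have hγ0 : γ ≠ 0 := by
      intro h0
      rw [hδ0, h0] at hd
      simp at hd
    obtain ⟨vγ, hvγ⟩ := val_exists_coe hγ0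
    exact main_case2 φ hm ht hd hvγ (by rw [hδ0, val_zero]; exact le_top) x
  · by_cases hγ0 : γ = 0
    · obtain ⟨vδ, hvδ⟩ := val_exists_coe hδ0
      exact main_case1 φ hm ht hd hvδ (by rw [hγ0, val_zero]; exact le_top) x
    · obtain ⟨vδ, hvδ⟩ := val_exists_coe hδ0
      obtain ⟨vγ, hvγ⟩ := val_exists_coe hγ0
      rcases le_or_gt vγ vδ with hle | hlt
      · refine main_case2 φ hm ht hd hvγ ?_ x
        rw [hvδ]
        exact_mod_cast hle
      · refine main_case1 φ hm ht hd hvδ ?_ x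
        rw [hvγ]
        have : ((vδ : WithTop ℤ) + 1) = (((vδ + 1 : ℤ)) : WithTop ℤ) := by push_cast; ring
        rw [this]
        exact_mod_cast hlt

end ADLV

/-- for `b = diag(ε^m, ε^{−m})` with `m ≠ 0`, `t ∈ o_L^×` and
`τ = diag(t, t⁻¹)`, one has `g⁻¹·b·σ(g) ∈ I·x·I` iff `(τg)⁻¹·b·σ(τg) ∈ I·x·I`; in
particular the affine Deligne–Lusztig set `X_x(b) ⊆ SL_2(L)/I` is preserved by left
multiplication by `τ`. -/
theorem sl2_torus_action_preserves_adlv (F : Type*) [Field F] [Fintype F]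
    (σ : LaurentSeries (AlgebraicClosure F) → LaurentSeries (AlgebraicClosure F))
    (hσ : IsFrobenius (AlgebraicClosure F) (Fintype.card F) σ)
    (m : ℤ) (hm : m ≠ 0)
    (t : LaurentSeries (AlgebraicClosure F)) (ht : val t = 0)
    (g x : Matrix (Fin 2) (Fin 2) (LaurentSeries (AlgebraicClosure F)))
    (hg : g.det = 1) (hx : EpsMonomial x) (hxdet : x.det = 1) :
    InIxISL x (g⁻¹ * Matrix.diagonal ![eps (AlgebraicClosure F) ^ m,
        eps (AlgebraicClosure F) ^ (-m)] * g.map σ) ↔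
    InIxISL x ((Matrix.diagonal ![t, t⁻¹] * g)⁻¹ *
        Matrix.diagonal ![eps (AlgebraicClosure F) ^ m, eps (AlgebraicClosure F) ^ (-m)] *
        (Matrix.diagonal ![t, t⁻¹] * g).map σ) := by
  classical
  haveI hchar : CharP F (ringChar F) := ringChar.charP F
  obtain ⟨n, hp, hcard⟩ := FiniteField.card F (ringChar F)
  haveI : Fact (ringChar F).Prime := ⟨hp⟩
  set φ : AlgebraicClosure F →+* AlgebraicClosure F :=
    iterateFrobenius (AlgebraicClosure F) (ringChar F) (n : ℕ) with hφdef
  have hφ : ∀ a : AlgebraicClosure F, φ a = a ^ (Fintype.card F) := by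
    intro a
    rw [hcard, hφdef]
    rfl
  have hfun : σ = ⇑(ADLV.liftHom φ) := by
    funext z
    ext nn
    rw [hσ z nn, ADLV.liftHom_coeff, hφ]
  have hb : Matrix.diagonal ![eps (AlgebraicClosure F) ^ m, eps (AlgebraicClosure F) ^ (-m)]
      = !![ADLV.epow (AlgebraicClosure F) m, 0; 0, ADLV.epow (AlgebraicClosure F) (-m)] := by
    rw [ADLV.diag_two, ADLV.eps_zpow, ADLV.eps_zpow]
  have hτ : Matrix.diagonal ![t, t⁻¹] = !![t, 0; 0, t⁻¹] := ADLV.diag_two t t⁻¹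
  rw [hfun, hb, hτ]
  exact ADLV.main_generic φ hm ht g x hg
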